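/- Law-of-cosines evaluation of arc endpoint distance: Let p, q, r be points in the plane forming a triangle, with ε_q the angle of triangle pqr at q and θ_q the angle at q in the triangle q r t, where t satisfies |rt| = δ_r and |qt| = l_q. If ε_q + θ_q ≤ 180° and cos(ε_q − θ_q) ≥ cos(ε_q + θ_q), then the endpoint b of the arc B_p = {x on circle C_r : |qx| ≥ l_q} farther from p satisfies |pb|² = |pq|² + l_q² − 2|pq| l_q cos(ε_q + θ_q). -/

import Mathlib

open EuclideanGeometry

/-- The Euclidean plane. -/
abbrev Plane := EuclideanSpace ℝ (Fin 2)

noncomputable instance : Fact (Module.finrank ℝ Plane = 2) := ⟨by simp⟩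

noncomputable instance : Module.Oriented ℝ Plane (Fin 2) :=
  ⟨(EuclideanSpace.basisFun (Fin 2) ℝ).toBasis.orientation⟩

/-- **Law-of-cosines evaluation of the arc endpoint distance.** The endpoint `b` of
the arc `B_p = {x ∈ C_r : |qx| ≥ l_q}` farther from `p` (an intersection point of
the circles around `r` and `q`) satisfies
`|pb|² = |pq|² + l_q² − 2|pq| l_q cos(ε_q + θ_q)`. -/
theorem arc_endpoint_distance (p q r : Plane)
    (htri : ¬ Collinear ℝ ({p, q, r} : Set Plane))
    (δ lq : ℝ) (hδ : 0 < δ) (hlq : 0 < lq)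
    (b : Plane) (hb : b ∈ Metric.sphere r δ ∩ Metric.sphere q lq)
    (hfar : ∀ b' ∈ Metric.sphere r δ ∩ Metric.sphere q lq, dist p b' ≤ dist p b)
    (hsum : ∠ p q r + ∠ r q b ≤ Real.pi)
    (hcos : Real.cos (∠ p q r + ∠ r q b) ≤ Real.cos (∠ p q r - ∠ r q b)) :
    dist p b ^ 2 =
      dist p q ^ 2 + lq ^ 2 - 2 * dist p q * lq * Real.cos (∠ p q r + ∠ r q b) := by
  -- distinctness
  have hpq : p ≠ q := by
    intro h
    apply htri
    rw [h]
    have : ({q, q, r} : Set Plane) = {q, r} := by simp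
    rw [this]
    exact collinear_pair ℝ q r
  have hrq : r ≠ q := by
    intro h
    apply htri
    rw [h]
    have : ({p, q, q} : Set Plane) = {p, q} := by simp
    rw [this]
    exact collinear_pair ℝ p q
  have hbr : dist b r = δ := Metric.mem_sphere.1 hb.1
  have hbq : dist b q = lq := Metric.mem_sphere.1 hb.2
  have hbne : b ≠ q := by
    intro h; rw [h, dist_self] at hbq; exact hlq.ne' hbq.symm
  have hdpq : 0 < dist p q := dist_pos.2 hpq
  -- the reflected point: rotate `b` about `q` by `-2 ϑ`, where `ϑ = ∡ r q b`
  obtain ⟨b', hb'q, hoang⟩ : ∃ b', dist b' q = lq ∧ ∡ r q b' = -(∡ r q b) := by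
    set O : Orientation ℝ Plane (Fin 2) := Module.Oriented.positiveOrientation with hO
    set ϑ : Real.Angle := ∡ r q b with hϑ
    refine ⟨O.rotation (-ϑ - ϑ) (b -ᵥ q) +ᵥ q, ?_, ?_⟩
    · rw [dist_eq_norm_vsub Plane, vadd_vsub, LinearIsometryEquiv.norm_map,
        ← dist_eq_norm_vsub Plane, hbq]
    · rw [oangle, vadd_vsub, hO]
      rw [Orientation.oangle_rotation_right _ (vsub_ne_zero.2 hrq) (vsub_ne_zero.2 hbne)]
      show ϑ + (-ϑ - ϑ) = -ϑ
      abel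
  have hb'ne : b' ≠ q := by
    intro h; rw [h, dist_self] at hb'q; exact hlq.ne' hb'q.symm
  -- cosines of angles at q towards b, b'
  have hcosb : Real.cos (∠ p q b) = Real.Angle.cos (∡ p q r + ∡ r q b) := by
    rw [oangle_add hpq hrq hbne, cos_oangle_eq_cos_angle hpq hbne]
  have hcosb' : Real.cos (∠ p q b') = Real.Angle.cos (∡ p q r - ∡ r q b) := by
    rw [← cos_oangle_eq_cos_angle hpq hb'ne, ← oangle_add hpq hrq hb'ne, hoang,
      sub_eq_add_neg]
  have hcosrb' : Real.cos (∠ r q b') = Real.cos (∠ r q b) := by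
    rw [← cos_oangle_eq_cos_angle hrq hb'ne, ← cos_oangle_eq_cos_angle hrq hbne, hoang,
      Real.Angle.cos_neg]
  -- b' is on the circle around r
  have hb'r : dist b' r = δ := by
    have h1 := EuclideanGeometry.law_cos r q b (V := Plane)
    have h2 := EuclideanGeometry.law_cos r q b' (V := Plane)
    rw [dist_comm r b, hbq] at h1
    rw [dist_comm r b', hb'q, hcosrb'] at h2
    rw [← h1, hbr] at h2
    rcases mul_self_eq_mul_self_iff.1 h2 with h | h
    · exact h
    · have := dist_nonneg (x := b') (y := r)
      linarith
  have hfar' : dist p b' ≤ dist p b := hfar b' ⟨Metric.mem_sphere.2 hb'r, Metric.mem_sphere.2 hb'q⟩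
  -- law of cosines at q
  have hlcb := EuclideanGeometry.law_cos p q b (V := Plane)
  have hlcb' := EuclideanGeometry.law_cos p q b' (V := Plane)
  rw [hbq] at hlcb
  rw [hb'q] at hlcb'
  -- farther point has the smaller cosine
  have hle : Real.cos (∠ p q b) ≤ Real.cos (∠ p q b') := by
    have hsq : dist p b' * dist p b' ≤ dist p b * dist p b :=
      mul_self_le_mul_self dist_nonneg hfar'
    rw [hlcb, hlcb'] at hsq
    nlinarith [mul_pos hdpq hlq]
  -- sign case analysis on the oriented angles
  have hkey : Real.cos (∠ p q b) = Real.cos (∠ p q r + ∠ r q b) := by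
    rcases oangle_eq_angle_or_eq_neg_angle hpq hrq with h1 | h1 <;>
      rcases oangle_eq_angle_or_eq_neg_angle hrq hbne with h2 | h2 <;>
      rw [h1, h2] at hcosb hcosb' <;>
      simp only [← Real.Angle.coe_neg, ← Real.Angle.coe_add, ← Real.Angle.coe_sub,
        Real.Angle.cos_coe] at hcosb hcosb'
    · exact hcosb
    · rw [show ∠ p q r + -∠ r q b = ∠ p q r - ∠ r q b by ring] at hcosb
      rw [show ∠ p q r - -∠ r q b = ∠ p q r + ∠ r q b by ring] at hcosb'
      linarith [hle.trans_eq hcosb', hcosb ▸ hle]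
    · rw [show -∠ p q r + ∠ r q b = -(∠ p q r - ∠ r q b) by ring, Real.cos_neg] at hcosb
      rw [show -∠ p q r - ∠ r q b = -(∠ p q r + ∠ r q b) by ring, Real.cos_neg] at hcosb'
      linarith [hle.trans_eq hcosb', hcosb ▸ hle]
    · rw [show -∠ p q r + -∠ r q b = -(∠ p q r + ∠ r q b) by ring, Real.cos_neg] at hcosb
      exact hcosb
  rw [hkey] at hlcb
  rw [pow_two, pow_two, pow_two]
  linarith [hlcb]
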